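/- arXiv:1504.00063 — 2 statements merged into one kernel-verified Lean document; each statement's English description precedes it below -/
import Mathlib

section
/- Let T > 0 and γ ∈ (0,1). If f, g : [0,T] → ℝ are continuously differentiable, then the following fractional integration by parts formula holds: ∫_0^T [(1/Γ(1−γ)) ∫_0^t (t−r)^{−γ} f'(r) dr] g(t) dt + f(0) · (1/Γ(1−γ)) ∫_0^T ξ^{−γ} g(ξ) dξ = ∫_0^T f(t) [−(1/Γ(1−γ)) ∫_t^T (ξ−t)^{−γ} g'(ξ) dξ] dt + g(T) · (1/Γ(1−γ)) ∫_0^T (T−ξ)^{−γ} f(ξ) dξ. -/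
open MeasureTheory Real Set


lemma tri_measurable (a b : ℝ) :
    MeasurableSet {p : ℝ × ℝ | a ≤ p.1 ∧ p.1 ≤ p.2 ∧ p.2 ≤ b} := by
  apply MeasurableSet.inter
  · exact measurableSet_le measurable_const measurable_fst
  · exact (measurableSet_le measurable_fst measurable_snd).inter
      (measurableSet_le measurable_snd measurable_const)

lemma swap_tri (a b : ℝ) (hab : a ≤ b) (φ : ℝ → ℝ → ℝ)
    (h : IntegrableOn (fun p : ℝ × ℝ => φ p.1 p.2)
      {p : ℝ × ℝ | a ≤ p.1 ∧ p.1 ≤ p.2 ∧ p.2 ≤ b}) :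
    ∫ x in a..b, ∫ y in x..b, φ x y = ∫ y in a..b, ∫ x in a..y, φ x y := by
  set S : Set (ℝ × ℝ) := {p : ℝ × ℝ | a ≤ p.1 ∧ p.1 ≤ p.2 ∧ p.2 ≤ b} with hS
  have hSm : MeasurableSet S := tri_measurable a b
  set ψ : ℝ × ℝ → ℝ := S.indicator (fun p => φ p.1 p.2) with hψdef
  have hψ : Integrable ψ (volume.prod volume) := (integrable_indicator_iff hSm).2 h
  have key : (∫ x : ℝ, ∫ y : ℝ, ψ (x, y)) = ∫ y : ℝ, ∫ x : ℝ, ψ (x, y) :=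
    integral_integral_swap (f := fun x y => ψ (x, y)) hψ
  have hL : ∀ x : ℝ, (∫ y : ℝ, ψ (x, y)) =
      (Icc a b).indicator (fun x => ∫ y in x..b, φ x y) x := by
    intro x
    rcases le_or_gt a x with hax | hax
    · rcases le_or_gt x b with hxb | hxb
      · have h1 : ∀ y : ℝ, ψ (x, y) = (Icc x b).indicator (fun y => φ x y) y := by
          intro y
          simp only [hψdef]
          by_cases hy : x ≤ y ∧ y ≤ b
          · rw [Set.indicator_of_mem (show (x, y) ∈ S from ⟨hax, hy.1, hy.2⟩),
              Set.indicator_of_mem (Set.mem_Icc.2 hy)]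
          · rw [Set.indicator_of_notMem (fun hc : (x,y) ∈ S => hy ⟨hc.2.1, hc.2.2⟩),
              Set.indicator_of_notMem (fun hc => hy (Set.mem_Icc.1 hc))]
        rw [show (fun y => ψ (x, y)) = (Icc x b).indicator (fun y => φ x y) from funext h1,
          integral_indicator measurableSet_Icc, integral_Icc_eq_integral_Ioc,
          ← intervalIntegral.integral_of_le hxb,
          Set.indicator_of_mem (Set.mem_Icc.2 ⟨hax, hxb⟩)]
      · have h1 : ∀ y : ℝ, ψ (x, y) = 0 := by
          intro y
          simp only [hψdef]
          apply Set.indicator_of_notMem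
          rintro ⟨-, h2, h3⟩
          exact absurd (h2.trans h3) (not_le.2 hxb)
        simp [show (fun y => ψ (x, y)) = fun _ => (0:ℝ) from funext h1,
          Set.indicator_of_notMem (fun hmem : x ∈ Icc a b => absurd hmem.2 (not_le.2 hxb))]
    · have h1 : ∀ y : ℝ, ψ (x, y) = 0 := by
        intro y
        simp only [hψdef]
        exact Set.indicator_of_notMem (fun hmem => absurd hmem.1 (not_le.2 hax)) _
      simp [show (fun y => ψ (x, y)) = fun _ => (0:ℝ) from funext h1,
        Set.indicator_of_notMem (fun hmem : x ∈ Icc a b => absurd hmem.1 (not_le.2 hax))]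
  have hR : ∀ y : ℝ, (∫ x : ℝ, ψ (x, y)) =
      (Icc a b).indicator (fun y => ∫ x in a..y, φ x y) y := by
    intro y
    rcases le_or_gt y b with hyb | hyb
    · rcases le_or_gt a y with hay | hay
      · have h1 : ∀ x : ℝ, ψ (x, y) = (Icc a y).indicator (fun x => φ x y) x := by
          intro x
          simp only [hψdef]
          by_cases hx : a ≤ x ∧ x ≤ y
          · rw [Set.indicator_of_mem (show (x, y) ∈ S from ⟨hx.1, hx.2, hyb⟩),
              Set.indicator_of_mem (Set.mem_Icc.2 hx)]
          · rw [Set.indicator_of_notMem (fun hc : (x,y) ∈ S => hx ⟨hc.1, hc.2.1⟩),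
              Set.indicator_of_notMem (fun hc => hx (Set.mem_Icc.1 hc))]
        rw [show (fun x => ψ (x, y)) = (Icc a y).indicator (fun x => φ x y) from funext h1,
          integral_indicator measurableSet_Icc, integral_Icc_eq_integral_Ioc,
          ← intervalIntegral.integral_of_le hay,
          Set.indicator_of_mem (Set.mem_Icc.2 ⟨hay, hyb⟩)]
      · have h1 : ∀ x : ℝ, ψ (x, y) = 0 := by
          intro x
          simp only [hψdef]
          apply Set.indicator_of_notMem
          rintro ⟨h2, h3, -⟩
          exact absurd (h2.trans h3) (not_le.2 hay)
        simp [show (fun x => ψ (x, y)) = fun _ => (0:ℝ) from funext h1,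
          Set.indicator_of_notMem (fun hmem : y ∈ Icc a b => absurd hmem.1 (not_le.2 hay))]
    · have h1 : ∀ x : ℝ, ψ (x, y) = 0 := by
        intro x
        simp only [hψdef]
        exact Set.indicator_of_notMem (fun hmem => absurd hmem.2.2 (not_le.2 hyb)) _
      simp [show (fun x => ψ (x, y)) = fun _ => (0:ℝ) from funext h1,
        Set.indicator_of_notMem (fun hmem : y ∈ Icc a b => absurd hmem.2 (not_le.2 hyb))]
  calc ∫ x in a..b, ∫ y in x..b, φ x y
      = ∫ x : ℝ, (Icc a b).indicator (fun x => ∫ y in x..b, φ x y) x := by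
        rw [integral_indicator measurableSet_Icc, integral_Icc_eq_integral_Ioc,
          ← intervalIntegral.integral_of_le hab]
    _ = ∫ x : ℝ, ∫ y : ℝ, ψ (x, y) := by simp_rw [hL]
    _ = ∫ y : ℝ, ∫ x : ℝ, ψ (x, y) := key
    _ = ∫ y : ℝ, (Icc a b).indicator (fun y => ∫ x in a..y, φ x y) y := by simp_rw [hR]
    _ = ∫ y in a..b, ∫ x in a..y, φ x y := by
        rw [integral_indicator measurableSet_Icc, integral_Icc_eq_integral_Ioc,
          ← intervalIntegral.integral_of_le hab]


section helpers
variable {γ : ℝ}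

-- 1D integrability of shifted kernels
lemma II_left (hγ : -1 < -γ) (c d : ℝ) :
    IntervalIntegrable (fun y => (y - c) ^ (-γ)) volume c d := by
  have := (intervalIntegral.intervalIntegrable_rpow' (a := c - c) (b := d - c) hγ).comp_sub_right c
  simpa using this

lemma II_right (hγ : -1 < -γ) (c d : ℝ) :
    IntervalIntegrable (fun t => (d - t) ^ (-γ)) volume c d := by
  have := (intervalIntegral.intervalIntegrable_rpow' (a := d - d) (b := d - c) hγ).comp_sub_left d
  simpa using this.symm

-- 1D evaluations
lemma eval_left (hγ0 : 0 < γ) (hγ1 : γ < 1) {c d : ℝ} (hcd : c ≤ d) :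
    ∫ y in c..d, (y - c) ^ (-γ) = (d - c) ^ (1 - γ) / (1 - γ) := by
  rw [intervalIntegral.integral_comp_sub_right (fun u => u ^ (-γ)) c]
  rw [integral_rpow (Or.inl (by linarith))]
  rw [sub_self, Real.zero_rpow (by linarith : -γ + 1 ≠ 0)]
  ring_nf

lemma eval_right (hγ0 : 0 < γ) (hγ1 : γ < 1) {c d : ℝ} (hcd : c ≤ d) :
    ∫ t in c..d, (d - t) ^ (-γ) = (d - c) ^ (1 - γ) / (1 - γ) := by
  rw [intervalIntegral.integral_comp_sub_left (fun u => u ^ (-γ)) d]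
  rw [integral_rpow (Or.inl (by linarith))]
  rw [sub_self, Real.zero_rpow (by linarith : -γ + 1 ≠ 0)]
  ring_nf
end helpers

section tri
variable {γ : ℝ} (a b : ℝ)

lemma tri_measurable' :
    MeasurableSet {p : ℝ × ℝ | a ≤ p.1 ∧ p.1 ≤ p.2 ∧ p.2 ≤ b} := by
  apply MeasurableSet.inter
  · exact measurableSet_le measurable_const measurable_fst
  · exact (measurableSet_le measurable_fst measurable_snd).inter
      (measurableSet_le measurable_snd measurable_const)

lemma tri_slice (φ : ℝ → ℝ → ℝ) (x : ℝ) (hax : a ≤ x) :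
    (fun y => ({p : ℝ × ℝ | a ≤ p.1 ∧ p.1 ≤ p.2 ∧ p.2 ≤ b}).indicator
      (fun p => φ p.1 p.2) (x, y)) = (Icc x b).indicator (φ x) := by
  funext y
  by_cases hy : x ≤ y ∧ y ≤ b
  · rw [Set.indicator_of_mem (show ((x:ℝ), y) ∈ {p : ℝ × ℝ | a ≤ p.1 ∧ p.1 ≤ p.2 ∧ p.2 ≤ b} from ⟨hax, hy.1, hy.2⟩),
      Set.indicator_of_mem (Set.mem_Icc.2 hy)]
  · rw [Set.indicator_of_notMem
      (fun hc : ((x:ℝ),y) ∈ {p : ℝ × ℝ | a ≤ p.1 ∧ p.1 ≤ p.2 ∧ p.2 ≤ b} => hy ⟨hc.2.1, hc.2.2⟩),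
      Set.indicator_of_notMem (fun hc => hy (Set.mem_Icc.1 hc))]

lemma tri_slice_zero (φ : ℝ → ℝ → ℝ) (x : ℝ) (hax : ¬ a ≤ x) :
    (fun y => ({p : ℝ × ℝ | a ≤ p.1 ∧ p.1 ≤ p.2 ∧ p.2 ≤ b}).indicator
      (fun p => φ p.1 p.2) (x, y)) = fun _ => (0:ℝ) := by
  funext y
  exact Set.indicator_of_notMem (fun hc => hax hc.1) _

lemma measurable_rpow_negγ (γ : ℝ) : Measurable (fun u : ℝ => u ^ (-γ)) :=
  measurable_of_continuousOn_compl_singleton 0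
    (fun x hx => (Real.continuousAt_rpow_const x (-γ) (Or.inl hx)).continuousWithinAt)

lemma integrableOn_tri_rpow (hγ0 : 0 < γ) (hγ1 : γ < 1) :
    IntegrableOn (fun p : ℝ × ℝ => (p.2 - p.1) ^ (-γ))
      {p : ℝ × ℝ | a ≤ p.1 ∧ p.1 ≤ p.2 ∧ p.2 ≤ b} := by
  set S := {p : ℝ × ℝ | a ≤ p.1 ∧ p.1 ≤ p.2 ∧ p.2 ≤ b} with hSdef
  have hSm : MeasurableSet S := tri_measurable' a b
  have kmeas : Measurable (fun p : ℝ × ℝ => (p.2 - p.1) ^ (-γ)) :=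
    (measurable_rpow_negγ γ).comp (measurable_snd.sub measurable_fst)
  rw [← integrable_indicator_iff hSm]
  set ψ := S.indicator (fun p : ℝ × ℝ => (p.2 - p.1) ^ (-γ)) with hψdef
  have hψm : AEStronglyMeasurable ψ (volume.prod volume) :=
    (kmeas.indicator hSm).aestronglyMeasurable
  have hslice : ∀ x : ℝ, a ≤ x → (fun y => ψ (x, y)) =
      (Icc x b).indicator (fun y => (y - x) ^ (-γ)) :=
    fun x hax => tri_slice a b (fun x y => (y - x) ^ (-γ)) x hax
  have hslice0 : ∀ x : ℝ, ¬ a ≤ x → (fun y => ψ (x, y)) = fun _ => 0 :=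
    fun x hax => tri_slice_zero a b (fun x y => (y - x) ^ (-γ)) x hax
  have hsliceInt : ∀ x : ℝ, Integrable (fun y => ψ (x, y)) := by
    intro x
    by_cases hax : a ≤ x
    · rw [hslice x hax, integrable_indicator_iff measurableSet_Icc]
      rcases le_or_gt x b with hxb | hxb
      · rw [integrableOn_Icc_iff_integrableOn_Ioc]
        exact (intervalIntegrable_iff_integrableOn_Ioc_of_le hxb).1 (II_left (by linarith) x b)
      · rw [Set.Icc_eq_empty (not_le.2 hxb)]; exact integrableOn_empty
    · rw [hslice0 x hax]; exact integrable_zero _ _ _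
  have hnorm : ∀ x : ℝ, x ∈ Icc a b →
      (fun y => ‖ψ (x, y)‖) = (Icc x b).indicator (fun y => (y - x) ^ (-γ)) := by
    intro x hx
    funext y
    rw [congrFun (hslice x hx.1) y, norm_indicator_eq_indicator_norm]
    by_cases hy : y ∈ Icc x b
    · rw [Set.indicator_of_mem hy, Set.indicator_of_mem hy]
      exact Real.norm_of_nonneg (Real.rpow_nonneg (by linarith [mem_Icc.1 hy |>.1]) _)
    · rw [Set.indicator_of_notMem hy, Set.indicator_of_notMem hy]
  refine (integrable_prod_iff hψm).2 ⟨Filter.Eventually.of_forall hsliceInt, ?_⟩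
  apply Integrable.mono' (g := (Icc a b).indicator fun _ => (b - a) ^ (1 - γ) / (1 - γ))
  · rw [integrable_indicator_iff measurableSet_Icc]
    exact integrableOn_const measure_Icc_lt_top.ne
  · exact hψm.norm.integral_prod_right'
  · apply Filter.Eventually.of_forall
    intro x
    by_cases hx : x ∈ Icc a b
    · rw [Set.indicator_of_mem hx]
      have hx' := Set.mem_Icc.1 hx
      rw [hnorm x hx, integral_indicator measurableSet_Icc, integral_Icc_eq_integral_Ioc,
        ← intervalIntegral.integral_of_le hx'.2, eval_left hγ0 hγ1 hx'.2]
      have h0 : (0:ℝ) ≤ (b - x) ^ (1 - γ) / (1 - γ) :=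
        div_nonneg (Real.rpow_nonneg (by linarith [hx'.2]) _) (by linarith)
      rw [Real.norm_of_nonneg h0]
      have : (b - x) ^ (1 - γ) ≤ (b - a) ^ (1 - γ) :=
        Real.rpow_le_rpow (by linarith [hx'.2]) (by linarith [hx'.1]) (by linarith)
      exact div_le_div_of_nonneg_right this (by linarith) |>.trans_eq rfl
    · rw [Set.indicator_of_notMem hx]
      have hzero : (fun y => ψ (x, y)) = fun _ => (0:ℝ) := by
        by_cases hax : a ≤ x
        · have hxb : b < x := by
            by_contra hc
            exact hx (Set.mem_Icc.2 ⟨hax, not_lt.1 hc⟩)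
          rw [hslice x hax, Set.Icc_eq_empty (not_le.2 hxb)]
          funext y; simp
        · exact hslice0 x hax
      have : (fun y => ‖ψ (x, y)‖) = fun _ => (0:ℝ) := by
        funext y; rw [congrFun hzero y]; simp
      rw [this]; simp

lemma integrableOn_tri_fst (h : ℝ → ℝ) (hh : IntegrableOn h (Icc a b)) :
    IntegrableOn (fun p : ℝ × ℝ => h p.1)
      {p : ℝ × ℝ | a ≤ p.1 ∧ p.1 ≤ p.2 ∧ p.2 ≤ b} := by
  have sq : IntegrableOn (fun p : ℝ × ℝ => h p.1) (Icc a b ×ˢ Icc a b) := by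
    rw [IntegrableOn, Measure.volume_eq_prod, ← Measure.prod_restrict]
    have := Integrable.mul_prod (L := ℝ) hh ((integrable_const (1:ℝ)) :
      Integrable (fun _ : ℝ => (1:ℝ)) (volume.restrict (Icc a b)))
    simpa using this
  exact sq.mono_set (fun p hp =>
    ⟨⟨hp.1, hp.2.1.trans hp.2.2⟩, ⟨hp.1.trans hp.2.1, hp.2.2⟩⟩)

lemma integrableOn_tri_snd (h : ℝ → ℝ) (hh : IntegrableOn h (Icc a b)) :
    IntegrableOn (fun p : ℝ × ℝ => h p.2)
      {p : ℝ × ℝ | a ≤ p.1 ∧ p.1 ≤ p.2 ∧ p.2 ≤ b} := by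
  have sq : IntegrableOn (fun p : ℝ × ℝ => h p.2) (Icc a b ×ˢ Icc a b) := by
    rw [IntegrableOn, Measure.volume_eq_prod, ← Measure.prod_restrict]
    have := Integrable.mul_prod (L := ℝ) ((integrable_const (1:ℝ)) :
      Integrable (fun _ : ℝ => (1:ℝ)) (volume.restrict (Icc a b))) hh
    simpa using this
  exact sq.mono_set (fun p hp =>
    ⟨⟨hp.1, hp.2.1.trans hp.2.2⟩, ⟨hp.1.trans hp.2.1, hp.2.2⟩⟩)

lemma integrableOn_tri_mono (k φ : ℝ × ℝ → ℝ)
    (hk : IntegrableOn k {p : ℝ × ℝ | a ≤ p.1 ∧ p.1 ≤ p.2 ∧ p.2 ≤ b})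
    (hm : AEStronglyMeasurable φ
      ((volume.prod volume).restrict {p : ℝ × ℝ | a ≤ p.1 ∧ p.1 ≤ p.2 ∧ p.2 ≤ b}))
    (hb : ∀ p ∈ {p : ℝ × ℝ | a ≤ p.1 ∧ p.1 ≤ p.2 ∧ p.2 ≤ b}, ‖φ p‖ ≤ k p) :
    IntegrableOn φ {p : ℝ × ℝ | a ≤ p.1 ∧ p.1 ≤ p.2 ∧ p.2 ≤ b} :=
  Integrable.mono' hk hm
    ((ae_restrict_iff' (tri_measurable' a b)).2 (Filter.Eventually.of_forall hb))
end tri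

example : True := trivial

lemma cont_rpow_pos {c : ℝ} (hc : 0 < c) : Continuous (fun u : ℝ => u ^ c) := by
  rw [continuous_iff_continuousAt]
  intro x
  exact Real.continuousAt_rpow_const x c (Or.inr hc.le)

-- primitive continuity
lemma cont_prim (f' : ℝ → ℝ) (hf' : Continuous f') (a₀ : ℝ) :
    Continuous fun x => ∫ t in a₀..x, f' t := by
  exact intervalIntegral.continuous_parametric_intervalIntegral_of_continuous
    (f := fun _ t => f' t) (hf'.comp continuous_snd) continuous_id

-- integral from x to T of parametric continuous integrand
lemma cont_back (F : ℝ → ℝ → ℝ) (hF : Continuous (Function.uncurry F)) (b : ℝ) :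
    Continuous fun x => ∫ t in x..b, F x t := by
  have h1 : Continuous fun x => ∫ t in b..x, F x t :=
    intervalIntegral.continuous_parametric_intervalIntegral_of_continuous hF continuous_id
  have h2 : (fun x => ∫ t in x..b, F x t) = fun x => -∫ t in b..x, F x t := by
    funext x; rw [intervalIntegral.integral_symm]
  rw [h2]; exact h1.neg

-- test names
example (f : ℝ → ℝ) (c a b : ℝ) : ∫ x in a..b, f x * c = (∫ x in a..b, f x) * c :=
  intervalIntegral.integral_mul_const c f

example (f : ℝ → ℝ) (c a b : ℝ) : ∫ x in a..b, c * f x = c * ∫ x in a..b, f x :=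
  intervalIntegral.integral_const_mul c f

lemma bound_of_cont (h : ℝ → ℝ) (hc : Continuous h) (a b : ℝ) :
    ∃ C : ℝ, 0 ≤ C ∧ ∀ x ∈ Icc a b, ‖h x‖ ≤ C := by
  obtain ⟨C, hC⟩ := isCompact_Icc.exists_bound_of_continuousOn (hc.continuousOn (s := Icc a b))
  exact ⟨max C 0, le_max_right _ _, fun x hx => (hC x hx).trans (le_max_left _ _)⟩

lemma isCompact_tri (a b : ℝ) :
    IsCompact {p : ℝ × ℝ | a ≤ p.1 ∧ p.1 ≤ p.2 ∧ p.2 ≤ b} := by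
  apply IsCompact.of_isClosed_subset (isCompact_Icc.prod isCompact_Icc)
  · exact (isClosed_le continuous_const continuous_fst).inter
      ((isClosed_le continuous_fst continuous_snd).inter
        (isClosed_le continuous_snd continuous_const))
  · exact fun p hp => ⟨⟨hp.1, hp.2.1.trans hp.2.2⟩, ⟨hp.1.trans hp.2.1, hp.2.2⟩⟩

lemma integrableOn_tri_kmul (a b : ℝ) (k : ℝ × ℝ → ℝ) (u v : ℝ → ℝ)
    (hk : IntegrableOn k {p : ℝ × ℝ | a ≤ p.1 ∧ p.1 ≤ p.2 ∧ p.2 ≤ b})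
    (hkm : Measurable k)
    (hknn : ∀ p ∈ {p : ℝ × ℝ | a ≤ p.1 ∧ p.1 ≤ p.2 ∧ p.2 ≤ b}, 0 ≤ k p)
    (hu : Continuous u) (hv : Continuous v) :
    IntegrableOn (fun p : ℝ × ℝ => k p * u p.1 * v p.2)
      {p : ℝ × ℝ | a ≤ p.1 ∧ p.1 ≤ p.2 ∧ p.2 ≤ b} := by
  obtain ⟨Cu, hCu0, hCu⟩ := bound_of_cont u hu a b
  obtain ⟨Cv, hCv0, hCv⟩ := bound_of_cont v hv a b
  apply integrableOn_tri_mono a b (fun p => k p * (Cu * Cv))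
  · exact hk.mul_const _
  · exact ((hkm.mul (hu.measurable.comp measurable_fst)).mul
      (hv.measurable.comp measurable_snd)).aestronglyMeasurable.restrict
  · intro p hp
    have h1 : p.1 ∈ Icc a b := ⟨hp.1, hp.2.1.trans hp.2.2⟩
    have h2 : p.2 ∈ Icc a b := ⟨hp.1.trans hp.2.1, hp.2.2⟩
    calc ‖k p * u p.1 * v p.2‖ = k p * ‖u p.1‖ * ‖v p.2‖ := by
          rw [norm_mul, norm_mul, Real.norm_of_nonneg (hknn p hp)]
      _ ≤ k p * Cu * Cv := by
          apply mul_le_mul (mul_le_mul le_rfl (hCu _ h1) (norm_nonneg _) (hknn p hp))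
            (hCv _ h2) (norm_nonneg _) (mul_nonneg (hknn p hp) hCu0)
      _ = k p * (Cu * Cv) := by ring

section claims
variable {T γ : ℝ} {f f' g g' : ℝ → ℝ}

lemma claimL2 (hT : 0 < T) (hγ0 : 0 < γ) (hγ1 : γ < 1)
    (hg' : Continuous g')
    (hgr : ∀ t ∈ Icc (0:ℝ) T, g t = g T - ∫ ξ in t..T, g' ξ) :
    ∫ ξ in (0:ℝ)..T, ξ ^ (-γ) * g ξ
      = g T * (T ^ (1 - γ) / (1 - γ)) - ∫ y in (0:ℝ)..T, g' y * (y ^ (1 - γ) / (1 - γ)) := by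
  have hIIk : IntervalIntegrable (fun ξ : ℝ => ξ ^ (-γ)) volume 0 T := by
    simpa using II_left (γ := γ) (by linarith) 0 T
  have hG0c : Continuous fun ξ => ∫ y in ξ..T, g' y :=
    cont_back (fun _ t => g' t) (hg'.comp continuous_snd) T
  have step1 : ∫ ξ in (0:ℝ)..T, ξ ^ (-γ) * g ξ
      = ∫ ξ in (0:ℝ)..T, (ξ ^ (-γ) * g T - ξ ^ (-γ) * ∫ y in ξ..T, g' y) := by
    apply intervalIntegral.integral_congr
    intro ξ hξ
    rw [uIcc_of_le hT.le] at hξ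
    dsimp only
    rw [hgr ξ hξ]; ring
  have hIIsnd : IntervalIntegrable (fun ξ : ℝ => ξ ^ (-γ) * ∫ y in ξ..T, g' y) volume 0 T :=
    hIIk.mul_continuousOn hG0c.continuousOn
  have step2 : ∫ ξ in (0:ℝ)..T, (ξ ^ (-γ) * g T - ξ ^ (-γ) * ∫ y in ξ..T, g' y)
      = (∫ ξ in (0:ℝ)..T, ξ ^ (-γ) * g T) - ∫ ξ in (0:ℝ)..T, ξ ^ (-γ) * ∫ y in ξ..T, g' y :=
    intervalIntegral.integral_sub (hIIk.mul_const _) hIIsnd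
  have step3 : ∫ ξ in (0:ℝ)..T, ξ ^ (-γ) * g T = g T * (T ^ (1 - γ) / (1 - γ)) := by
    rw [intervalIntegral.integral_mul_const,
      show ∫ ξ in (0:ℝ)..T, ξ ^ (-γ) = T ^ (1 - γ) / (1 - γ) from by
        simpa using eval_left hγ0 hγ1 hT.le]
    ring
  have hint : IntegrableOn (fun p : ℝ × ℝ => p.1 ^ (-γ) * g' p.2)
      {p : ℝ × ℝ | 0 ≤ p.1 ∧ p.1 ≤ p.2 ∧ p.2 ≤ T} := by
    have hk : IntegrableOn (fun p : ℝ × ℝ => p.1 ^ (-γ))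
        {p : ℝ × ℝ | 0 ≤ p.1 ∧ p.1 ≤ p.2 ∧ p.2 ≤ T} := by
      apply integrableOn_tri_fst 0 T (fun u => u ^ (-γ))
      rw [integrableOn_Icc_iff_integrableOn_Ioc]
      exact (intervalIntegrable_iff_integrableOn_Ioc_of_le hT.le).1 hIIk
    have := integrableOn_tri_kmul 0 T (fun p : ℝ × ℝ => p.1 ^ (-γ)) (fun _ => 1) g'
      hk ((measurable_rpow_negγ γ).comp measurable_fst)
      (fun p hp => Real.rpow_nonneg hp.1 _) continuous_const hg'
    simpa using this
  have step4 : ∫ ξ in (0:ℝ)..T, ξ ^ (-γ) * ∫ y in ξ..T, g' y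
      = ∫ y in (0:ℝ)..T, g' y * (y ^ (1 - γ) / (1 - γ)) := by
    have h1 : ∫ ξ in (0:ℝ)..T, ξ ^ (-γ) * ∫ y in ξ..T, g' y
        = ∫ ξ in (0:ℝ)..T, ∫ y in ξ..T, ξ ^ (-γ) * g' y := by
      apply intervalIntegral.integral_congr
      exact fun ξ _ => (intervalIntegral.integral_const_mul _ _).symm
    rw [h1, swap_tri 0 T hT.le (fun x y => x ^ (-γ) * g' y) hint]
    apply intervalIntegral.integral_congr
    intro y hy
    rw [uIcc_of_le hT.le] at hy
    dsimp only
    rw [intervalIntegral.integral_mul_const,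
      show ∫ x in (0:ℝ)..y, x ^ (-γ) = y ^ (1 - γ) / (1 - γ) from by
        simpa using eval_left hγ0 hγ1 hy.1]
    ring
  rw [step1, step2, step3, step4]

lemma claimR2 (hT : 0 < T) (hγ0 : 0 < γ) (hγ1 : γ < 1)
    (hf' : Continuous f')
    (hfr : ∀ t ∈ Icc (0:ℝ) T, f t = f 0 + ∫ r in (0:ℝ)..t, f' r) :
    ∫ ξ in (0:ℝ)..T, (T - ξ) ^ (-γ) * f ξ
      = f 0 * (T ^ (1 - γ) / (1 - γ))
        + ∫ x in (0:ℝ)..T, f' x * ((T - x) ^ (1 - γ) / (1 - γ)) := by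
  have hIIk : IntervalIntegrable (fun ξ : ℝ => (T - ξ) ^ (-γ)) volume 0 T :=
    II_right (by linarith) 0 T
  have hF0c : Continuous fun t => ∫ r in (0:ℝ)..t, f' r := cont_prim f' hf' 0
  have step1 : ∫ ξ in (0:ℝ)..T, (T - ξ) ^ (-γ) * f ξ
      = ∫ ξ in (0:ℝ)..T, ((T - ξ) ^ (-γ) * f 0
          + (T - ξ) ^ (-γ) * ∫ r in (0:ℝ)..ξ, f' r) := by
    apply intervalIntegral.integral_congr
    intro ξ hξ
    rw [uIcc_of_le hT.le] at hξ
    dsimp only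
    rw [hfr ξ hξ]; ring
  have step2 : ∫ ξ in (0:ℝ)..T, ((T - ξ) ^ (-γ) * f 0
          + (T - ξ) ^ (-γ) * ∫ r in (0:ℝ)..ξ, f' r)
      = (∫ ξ in (0:ℝ)..T, (T - ξ) ^ (-γ) * f 0)
        + ∫ ξ in (0:ℝ)..T, (T - ξ) ^ (-γ) * ∫ r in (0:ℝ)..ξ, f' r :=
    intervalIntegral.integral_add (hIIk.mul_const _)
      (hIIk.mul_continuousOn hF0c.continuousOn)
  have step3 : ∫ ξ in (0:ℝ)..T, (T - ξ) ^ (-γ) * f 0 = f 0 * (T ^ (1 - γ) / (1 - γ)) := by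
    rw [intervalIntegral.integral_mul_const,
      show ∫ ξ in (0:ℝ)..T, (T - ξ) ^ (-γ) = T ^ (1 - γ) / (1 - γ) from by
        simpa using eval_right hγ0 hγ1 hT.le]
    ring
  have hint : IntegrableOn (fun p : ℝ × ℝ => (T - p.2) ^ (-γ) * f' p.1)
      {p : ℝ × ℝ | 0 ≤ p.1 ∧ p.1 ≤ p.2 ∧ p.2 ≤ T} := by
    have hk : IntegrableOn (fun p : ℝ × ℝ => (T - p.2) ^ (-γ))
        {p : ℝ × ℝ | 0 ≤ p.1 ∧ p.1 ≤ p.2 ∧ p.2 ≤ T} := by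
      apply integrableOn_tri_snd 0 T (fun u => (T - u) ^ (-γ))
      rw [integrableOn_Icc_iff_integrableOn_Ioc]
      exact (intervalIntegrable_iff_integrableOn_Ioc_of_le hT.le).1 hIIk
    have := integrableOn_tri_kmul 0 T (fun p : ℝ × ℝ => (T - p.2) ^ (-γ)) f' (fun _ => 1)
      hk ((measurable_rpow_negγ γ).comp (measurable_const.sub measurable_snd))
      (fun p hp => Real.rpow_nonneg (by linarith [hp.2.2] : (0:ℝ) ≤ T - p.2) _) hf'
      continuous_const
    simpa using this
  have step4 : ∫ ξ in (0:ℝ)..T, (T - ξ) ^ (-γ) * ∫ r in (0:ℝ)..ξ, f' r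
      = ∫ x in (0:ℝ)..T, f' x * ((T - x) ^ (1 - γ) / (1 - γ)) := by
    have h1 : ∫ ξ in (0:ℝ)..T, (T - ξ) ^ (-γ) * ∫ r in (0:ℝ)..ξ, f' r
        = ∫ ξ in (0:ℝ)..T, ∫ r in (0:ℝ)..ξ, (T - ξ) ^ (-γ) * f' r := by
      apply intervalIntegral.integral_congr
      exact fun ξ _ => (intervalIntegral.integral_const_mul _ _).symm
    rw [h1, ← swap_tri 0 T hT.le (fun x y => (T - y) ^ (-γ) * f' x) hint]
    apply intervalIntegral.integral_congr
    intro x hx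
    rw [uIcc_of_le hT.le] at hx
    dsimp only
    have h2 : ∫ y in x..T, (T - y) ^ (-γ) * f' x
        = (∫ y in x..T, (T - y) ^ (-γ)) * f' x := intervalIntegral.integral_mul_const _ _
    rw [h2, eval_right hγ0 hγ1 hx.2]
    ring
  rw [step1, step2, step3, step4]
end claims
section claims2
variable {T γ : ℝ} {f f' g g' : ℝ → ℝ}

lemma claimR1 (hT : 0 < T) (hγ0 : 0 < γ) (hγ1 : γ < 1)
    (hf : Continuous f) (hf' : Continuous f') (hg' : Continuous g')
    (hfr : ∀ t ∈ Icc (0:ℝ) T, f t = f 0 + ∫ r in (0:ℝ)..t, f' r) :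
    ∫ t in (0:ℝ)..T, f t * ∫ ξ in t..T, (ξ - t) ^ (-γ) * g' ξ
      = f 0 * (∫ y in (0:ℝ)..T, g' y * (y ^ (1 - γ) / (1 - γ)))
        + ∫ y in (0:ℝ)..T, g' y * ∫ x in (0:ℝ)..y, f' x * ((y - x) ^ (1 - γ) / (1 - γ)) := by
  have hWc : Continuous fun u : ℝ => u ^ (1 - γ) := cont_rpow_pos (by linarith)
  have hF0c : Continuous fun t => ∫ r in (0:ℝ)..t, f' r := cont_prim f' hf' 0
  have h1 : ∫ t in (0:ℝ)..T, f t * ∫ ξ in t..T, (ξ - t) ^ (-γ) * g' ξ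
      = ∫ t in (0:ℝ)..T, ∫ ξ in t..T, (ξ - t) ^ (-γ) * f t * g' ξ := by
    apply intervalIntegral.integral_congr
    intro t _
    dsimp only
    rw [← intervalIntegral.integral_const_mul]
    apply intervalIntegral.integral_congr
    intro ξ _
    dsimp only
    ring
  have hint1 : IntegrableOn (fun p : ℝ × ℝ => (p.2 - p.1) ^ (-γ) * f p.1 * g' p.2)
      {p : ℝ × ℝ | 0 ≤ p.1 ∧ p.1 ≤ p.2 ∧ p.2 ≤ T} :=
    integrableOn_tri_kmul 0 T (fun p => (p.2 - p.1) ^ (-γ)) f g'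
      (integrableOn_tri_rpow 0 T hγ0 hγ1)
      ((measurable_rpow_negγ γ).comp (measurable_snd.sub measurable_fst))
      (fun p hp => Real.rpow_nonneg (by linarith [hp.2.1] : (0:ℝ) ≤ p.2 - p.1) _) hf hg'
  have h2 : ∫ t in (0:ℝ)..T, ∫ ξ in t..T, (ξ - t) ^ (-γ) * f t * g' ξ
      = ∫ y in (0:ℝ)..T, ∫ x in (0:ℝ)..y, (y - x) ^ (-γ) * f x * g' y :=
    swap_tri 0 T hT.le (fun x y => (y - x) ^ (-γ) * f x * g' y) hint1
  have h3 : ∫ y in (0:ℝ)..T, ∫ x in (0:ℝ)..y, (y - x) ^ (-γ) * f x * g' y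
      = ∫ y in (0:ℝ)..T, (f 0 * (g' y * (y ^ (1 - γ) / (1 - γ)))
          + g' y * ∫ x in (0:ℝ)..y, f' x * ((y - x) ^ (1 - γ) / (1 - γ))) := by
    apply intervalIntegral.integral_congr
    intro y hy
    rw [uIcc_of_le hT.le] at hy
    dsimp only
    have hIIy : IntervalIntegrable (fun x => (y - x) ^ (-γ)) volume 0 y :=
      II_right (by linarith) 0 y
    have e1 : ∫ x in (0:ℝ)..y, (y - x) ^ (-γ) * f x * g' y
        = (∫ x in (0:ℝ)..y, (y - x) ^ (-γ) * f x) * g' y :=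
      intervalIntegral.integral_mul_const _ _
    have e2 : ∫ x in (0:ℝ)..y, (y - x) ^ (-γ) * f x
        = ∫ x in (0:ℝ)..y, ((y - x) ^ (-γ) * f 0
            + (y - x) ^ (-γ) * ∫ r in (0:ℝ)..x, f' r) := by
      apply intervalIntegral.integral_congr
      intro x hx
      rw [uIcc_of_le hy.1] at hx
      dsimp only
      rw [hfr x ⟨hx.1, hx.2.trans hy.2⟩]; ring
    have e3 : ∫ x in (0:ℝ)..y, ((y - x) ^ (-γ) * f 0
            + (y - x) ^ (-γ) * ∫ r in (0:ℝ)..x, f' r)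
        = (∫ x in (0:ℝ)..y, (y - x) ^ (-γ) * f 0)
          + ∫ x in (0:ℝ)..y, (y - x) ^ (-γ) * ∫ r in (0:ℝ)..x, f' r :=
      intervalIntegral.integral_add (hIIy.mul_const _)
        (hIIy.mul_continuousOn hF0c.continuousOn)
    have e4 : ∫ x in (0:ℝ)..y, (y - x) ^ (-γ) * f 0
        = (y ^ (1 - γ) / (1 - γ)) * f 0 := by
      rw [intervalIntegral.integral_mul_const,
        show ∫ x in (0:ℝ)..y, (y - x) ^ (-γ) = y ^ (1 - γ) / (1 - γ) from by
          simpa using eval_right hγ0 hγ1 hy.1]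
    have hint2 : IntegrableOn (fun p : ℝ × ℝ => (y - p.2) ^ (-γ) * f' p.1)
        {p : ℝ × ℝ | 0 ≤ p.1 ∧ p.1 ≤ p.2 ∧ p.2 ≤ y} := by
      have hk : IntegrableOn (fun p : ℝ × ℝ => (y - p.2) ^ (-γ))
          {p : ℝ × ℝ | 0 ≤ p.1 ∧ p.1 ≤ p.2 ∧ p.2 ≤ y} := by
        apply integrableOn_tri_snd 0 y (fun u => (y - u) ^ (-γ))
        rw [integrableOn_Icc_iff_integrableOn_Ioc]
        exact (intervalIntegrable_iff_integrableOn_Ioc_of_le hy.1).1 hIIy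
      have := integrableOn_tri_kmul 0 y (fun p : ℝ × ℝ => (y - p.2) ^ (-γ)) f' (fun _ => 1)
        hk ((measurable_rpow_negγ γ).comp (measurable_const.sub measurable_snd))
        (fun p hp => Real.rpow_nonneg (by linarith [hp.2.2] : (0:ℝ) ≤ y - p.2) _) hf'
        continuous_const
      simpa using this
    have e5 : ∫ x in (0:ℝ)..y, (y - x) ^ (-γ) * ∫ r in (0:ℝ)..x, f' r
        = ∫ r in (0:ℝ)..y, f' r * ((y - r) ^ (1 - γ) / (1 - γ)) := by
      have e5a : ∫ x in (0:ℝ)..y, (y - x) ^ (-γ) * ∫ r in (0:ℝ)..x, f' r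
          = ∫ x in (0:ℝ)..y, ∫ r in (0:ℝ)..x, (y - x) ^ (-γ) * f' r := by
        apply intervalIntegral.integral_congr
        exact fun x _ => (intervalIntegral.integral_const_mul _ _).symm
      rw [e5a, ← swap_tri 0 y hy.1 (fun r x => (y - x) ^ (-γ) * f' r) hint2]
      apply intervalIntegral.integral_congr
      intro r hr
      rw [uIcc_of_le hy.1] at hr
      dsimp only
      rw [intervalIntegral.integral_mul_const, eval_right hγ0 hγ1 hr.2]
      ring
    rw [e1, e2, e3, e4, e5]; ring
  have hKc : Continuous fun y => ∫ x in (0:ℝ)..y, f' x * ((y - x) ^ (1 - γ) / (1 - γ)) :=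
    intervalIntegral.continuous_parametric_intervalIntegral_of_continuous
      (f := fun y t => f' t * ((y - t) ^ (1 - γ) / (1 - γ)))
      (((hf'.comp continuous_snd)).mul
        ((hWc.comp (continuous_fst.sub continuous_snd)).div_const _)) continuous_id
  have h4 : ∫ y in (0:ℝ)..T, (f 0 * (g' y * (y ^ (1 - γ) / (1 - γ)))
          + g' y * ∫ x in (0:ℝ)..y, f' x * ((y - x) ^ (1 - γ) / (1 - γ)))
      = (∫ y in (0:ℝ)..T, f 0 * (g' y * (y ^ (1 - γ) / (1 - γ))))
        + ∫ y in (0:ℝ)..T, g' y * ∫ x in (0:ℝ)..y, f' x * ((y - x) ^ (1 - γ) / (1 - γ)) :=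
    intervalIntegral.integral_add
      ((continuous_const.mul (hg'.mul ((hWc.comp continuous_id).div_const _))).continuousOn.intervalIntegrable)
      ((hg'.mul hKc).continuousOn.intervalIntegrable)
  rw [h1, h2, h3, h4, intervalIntegral.integral_const_mul]

lemma claimSW (hT : 0 < T) (hγ0 : 0 < γ) (hγ1 : γ < 1)
    (hf' : Continuous f') (hg' : Continuous g') :
    ∫ x in (0:ℝ)..T, f' x * ∫ y in x..T, g' y * ((y - x) ^ (1 - γ) / (1 - γ))
      = ∫ y in (0:ℝ)..T, g' y * ∫ x in (0:ℝ)..y, f' x * ((y - x) ^ (1 - γ) / (1 - γ)) := by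
  have hWc : Continuous fun u : ℝ => u ^ (1 - γ) := cont_rpow_pos (by linarith)
  have hφc : Continuous (fun p : ℝ × ℝ => f' p.1 * (g' p.2 * ((p.2 - p.1) ^ (1 - γ) / (1 - γ)))) :=
    (hf'.comp continuous_fst).mul ((hg'.comp continuous_snd).mul
      ((hWc.comp (continuous_snd.sub continuous_fst)).div_const _))
  have hint : IntegrableOn
      (fun p : ℝ × ℝ => f' p.1 * (g' p.2 * ((p.2 - p.1) ^ (1 - γ) / (1 - γ))))
      {p : ℝ × ℝ | 0 ≤ p.1 ∧ p.1 ≤ p.2 ∧ p.2 ≤ T} :=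
    hφc.continuousOn.integrableOn_compact (isCompact_tri 0 T)
  have h1 : ∫ x in (0:ℝ)..T, f' x * ∫ y in x..T, g' y * ((y - x) ^ (1 - γ) / (1 - γ))
      = ∫ x in (0:ℝ)..T, ∫ y in x..T, f' x * (g' y * ((y - x) ^ (1 - γ) / (1 - γ))) := by
    apply intervalIntegral.integral_congr
    exact fun x _ => (intervalIntegral.integral_const_mul _ _).symm
  rw [h1, swap_tri 0 T hT.le
    (fun x y => f' x * (g' y * ((y - x) ^ (1 - γ) / (1 - γ)))) hint]
  apply intervalIntegral.integral_congr
  intro y _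
  dsimp only
  rw [← intervalIntegral.integral_const_mul]
  apply intervalIntegral.integral_congr
  intro x _
  dsimp only
  ring
end claims2
section claims3
variable {T γ : ℝ} {f f' g g' : ℝ → ℝ}

lemma claimL1 (hT : 0 < T) (hγ0 : 0 < γ) (hγ1 : γ < 1)
    (hf' : Continuous f') (hg : Continuous g) (hg' : Continuous g')
    (hgr : ∀ t ∈ Icc (0:ℝ) T, g t = g T - ∫ ξ in t..T, g' ξ) :
    ∫ t in (0:ℝ)..T, (∫ r in (0:ℝ)..t, (t - r) ^ (-γ) * f' r) * g t
      = g T * (∫ x in (0:ℝ)..T, f' x * ((T - x) ^ (1 - γ) / (1 - γ)))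
        - ∫ x in (0:ℝ)..T, f' x * ∫ y in x..T, g' y * ((y - x) ^ (1 - γ) / (1 - γ)) := by
  have hWc : Continuous fun u : ℝ => u ^ (1 - γ) := cont_rpow_pos (by linarith)
  have hG0c : Continuous fun ξ => ∫ z in ξ..T, g' z :=
    cont_back (fun _ t => g' t) (hg'.comp continuous_snd) T
  have hSWc : Continuous fun x => ∫ y in x..T, g' y * ((y - x) ^ (1 - γ) / (1 - γ)) :=
    cont_back (fun x t => g' t * ((t - x) ^ (1 - γ) / (1 - γ)))
      ((hg'.comp continuous_snd).mul
        ((hWc.comp (continuous_snd.sub continuous_fst)).div_const _)) T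
  have h1 : ∫ t in (0:ℝ)..T, (∫ r in (0:ℝ)..t, (t - r) ^ (-γ) * f' r) * g t
      = ∫ t in (0:ℝ)..T, ∫ r in (0:ℝ)..t, (t - r) ^ (-γ) * f' r * g t := by
    apply intervalIntegral.integral_congr
    exact fun t _ => (intervalIntegral.integral_mul_const _ _).symm
  have hint1 : IntegrableOn (fun p : ℝ × ℝ => (p.2 - p.1) ^ (-γ) * f' p.1 * g p.2)
      {p : ℝ × ℝ | 0 ≤ p.1 ∧ p.1 ≤ p.2 ∧ p.2 ≤ T} :=
    integrableOn_tri_kmul 0 T (fun p => (p.2 - p.1) ^ (-γ)) f' g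
      (integrableOn_tri_rpow 0 T hγ0 hγ1)
      ((measurable_rpow_negγ γ).comp (measurable_snd.sub measurable_fst))
      (fun p hp => Real.rpow_nonneg (by linarith [hp.2.1] : (0:ℝ) ≤ p.2 - p.1) _) hf' hg
  have h2 : ∫ t in (0:ℝ)..T, ∫ r in (0:ℝ)..t, (t - r) ^ (-γ) * f' r * g t
      = ∫ x in (0:ℝ)..T, ∫ y in x..T, (y - x) ^ (-γ) * f' x * g y :=
    (swap_tri 0 T hT.le (fun x y => (y - x) ^ (-γ) * f' x * g y) hint1).symm
  have h3 : ∫ x in (0:ℝ)..T, ∫ y in x..T, (y - x) ^ (-γ) * f' x * g y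
      = ∫ x in (0:ℝ)..T, (g T * (f' x * ((T - x) ^ (1 - γ) / (1 - γ)))
          - f' x * ∫ y in x..T, g' y * ((y - x) ^ (1 - γ) / (1 - γ))) := by
    apply intervalIntegral.integral_congr
    intro x hx
    rw [uIcc_of_le hT.le] at hx
    dsimp only
    have hIIx : IntervalIntegrable (fun y => (y - x) ^ (-γ)) volume x T :=
      II_left (by linarith) x T
    have e2 : ∫ y in x..T, (y - x) ^ (-γ) * f' x * g y
        = ∫ y in x..T, ((y - x) ^ (-γ) * f' x * g T
            - (y - x) ^ (-γ) * f' x * ∫ z in y..T, g' z) := by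
      apply intervalIntegral.integral_congr
      intro y hy
      rw [uIcc_of_le hx.2] at hy
      dsimp only
      rw [hgr y ⟨hx.1.trans hy.1, hy.2⟩]; ring
    have e3 : ∫ y in x..T, ((y - x) ^ (-γ) * f' x * g T
            - (y - x) ^ (-γ) * f' x * ∫ z in y..T, g' z)
        = (∫ y in x..T, (y - x) ^ (-γ) * f' x * g T)
          - ∫ y in x..T, (y - x) ^ (-γ) * f' x * ∫ z in y..T, g' z :=
      intervalIntegral.integral_sub ((hIIx.mul_const _).mul_const _)
        ((hIIx.mul_const _).mul_continuousOn hG0c.continuousOn)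
    have e4 : ∫ y in x..T, (y - x) ^ (-γ) * f' x * g T
        = ((T - x) ^ (1 - γ) / (1 - γ)) * f' x * g T := by
      rw [intervalIntegral.integral_mul_const, intervalIntegral.integral_mul_const,
        eval_left hγ0 hγ1 hx.2]
    have hint2 : IntegrableOn (fun p : ℝ × ℝ => (p.1 - x) ^ (-γ) * f' x * g' p.2)
        {p : ℝ × ℝ | x ≤ p.1 ∧ p.1 ≤ p.2 ∧ p.2 ≤ T} := by
      have hk : IntegrableOn (fun p : ℝ × ℝ => (p.1 - x) ^ (-γ))
          {p : ℝ × ℝ | x ≤ p.1 ∧ p.1 ≤ p.2 ∧ p.2 ≤ T} := by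
        apply integrableOn_tri_fst x T (fun u => (u - x) ^ (-γ))
        rw [integrableOn_Icc_iff_integrableOn_Ioc]
        exact (intervalIntegrable_iff_integrableOn_Ioc_of_le hx.2).1 hIIx
      have := integrableOn_tri_kmul x T (fun p : ℝ × ℝ => (p.1 - x) ^ (-γ))
        (fun _ => f' x) g' hk
        ((measurable_rpow_negγ γ).comp (measurable_fst.sub measurable_const))
        (fun p hp => Real.rpow_nonneg (by linarith [hp.1] : (0:ℝ) ≤ p.1 - x) _)
        continuous_const hg'
      simpa using this
    have e5 : ∫ y in x..T, (y - x) ^ (-γ) * f' x * ∫ z in y..T, g' z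
        = f' x * ∫ y in x..T, g' y * ((y - x) ^ (1 - γ) / (1 - γ)) := by
      have e5a : ∫ y in x..T, (y - x) ^ (-γ) * f' x * ∫ z in y..T, g' z
          = ∫ y in x..T, ∫ z in y..T, (y - x) ^ (-γ) * f' x * g' z := by
        apply intervalIntegral.integral_congr
        exact fun y _ => (intervalIntegral.integral_const_mul _ _).symm
      rw [e5a, swap_tri x T hx.2 (fun u v => (u - x) ^ (-γ) * f' x * g' v) hint2]
      calc ∫ z in x..T, ∫ y in x..z, (y - x) ^ (-γ) * f' x * g' z
          = ∫ z in x..T, f' x * (g' z * ((z - x) ^ (1 - γ) / (1 - γ))) := by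
            apply intervalIntegral.integral_congr
            intro z hz
            rw [uIcc_of_le hx.2] at hz
            dsimp only
            rw [intervalIntegral.integral_mul_const, intervalIntegral.integral_mul_const,
              eval_left hγ0 hγ1 hz.1]
            ring
        _ = f' x * ∫ y in x..T, g' y * ((y - x) ^ (1 - γ) / (1 - γ)) :=
            intervalIntegral.integral_const_mul _ _
    rw [e2, e3, e4, e5]; ring
  have h4 : ∫ x in (0:ℝ)..T, (g T * (f' x * ((T - x) ^ (1 - γ) / (1 - γ)))
          - f' x * ∫ y in x..T, g' y * ((y - x) ^ (1 - γ) / (1 - γ)))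
      = (∫ x in (0:ℝ)..T, g T * (f' x * ((T - x) ^ (1 - γ) / (1 - γ))))
        - ∫ x in (0:ℝ)..T, f' x * ∫ y in x..T, g' y * ((y - x) ^ (1 - γ) / (1 - γ)) :=
    intervalIntegral.integral_sub
      ((continuous_const.mul (hf'.mul
        ((hWc.comp (continuous_const.sub continuous_id)).div_const _))).continuousOn.intervalIntegrable)
      ((hf'.mul hSWc).continuousOn.intervalIntegrable)
  rw [h1, h2, h3, h4, intervalIntegral.integral_const_mul]
end claims3

/-- **Fractional integration by parts for Caputo derivatives.**
For `γ ∈ (0,1)` and `f, g` continuously differentiable on `[0,T]`: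
`∫_0^T (∂_t^γ f) g dt + f(0) (I^{1-γ}_{T-} g)(0) = ∫_0^T f (∂_{T-t}^γ g) dt + g(T) (I^{1-γ}_{0+} f)(T)`,
written out with the left/right Caputo derivatives and Riemann–Liouville integrals. -/
theorem caputo_fractional_integration_by_parts
    (T γ : ℝ) (hT : 0 < T) (hγ : γ ∈ Ioo (0:ℝ) 1)
    (f f' g g' : ℝ → ℝ)
    (hf : ∀ t ∈ Icc (0:ℝ) T, HasDerivAt f (f' t) t)
    (hf' : ContinuousOn f' (Icc 0 T))
    (hg : ∀ t ∈ Icc (0:ℝ) T, HasDerivAt g (g' t) t)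
    (hg' : ContinuousOn g' (Icc 0 T)) :
    (∫ t in (0:ℝ)..T, ((1 / Real.Gamma (1 - γ)) * ∫ r in (0:ℝ)..t, (t - r) ^ (-γ) * f' r) * g t)
        + f 0 * ((1 / Real.Gamma (1 - γ)) * ∫ ξ in (0:ℝ)..T, ξ ^ (-γ) * g ξ) =
      (∫ t in (0:ℝ)..T, f t * (-(1 / Real.Gamma (1 - γ)) * ∫ ξ in t..T, (ξ - t) ^ (-γ) * g' ξ))
        + g T * ((1 / Real.Gamma (1 - γ)) * ∫ ξ in (0:ℝ)..T, (T - ξ) ^ (-γ) * f ξ) := by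
  obtain ⟨hγ0, hγ1⟩ := hγ
  set c : ℝ := 1 / Real.Gamma (1 - γ) with hc
  -- clamp function
  set cl : ℝ → ℝ := fun x => max 0 (min x T) with hcl
  have hclc : Continuous cl := continuous_const.max (continuous_id.min continuous_const)
  have hclmem : ∀ x, cl x ∈ Icc (0:ℝ) T :=
    fun x => ⟨le_max_left _ _, max_le hT.le (min_le_right _ _)⟩
  have hcleq : ∀ x ∈ Icc (0:ℝ) T, cl x = x := by
    intro x hx
    rw [hcl]; dsimp only; rw [min_eq_left hx.2, max_eq_right hx.1]
  have hfcont : ContinuousOn f (Icc 0 T) :=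
    fun x hx => (hf x hx).continuousAt.continuousWithinAt
  have hgcont : ContinuousOn g (Icc 0 T) :=
    fun x hx => (hg x hx).continuousAt.continuousWithinAt
  set fC : ℝ → ℝ := f ∘ cl with hfCdef
  set gC : ℝ → ℝ := g ∘ cl with hgCdef
  set f'C : ℝ → ℝ := f' ∘ cl with hf'Cdef
  set g'C : ℝ → ℝ := g' ∘ cl with hg'Cdef
  have hfCc : Continuous fC := hfcont.comp_continuous hclc hclmem
  have hgCc : Continuous gC := hgcont.comp_continuous hclc hclmem
  have hf'Cc : Continuous f'C := hf'.comp_continuous hclc hclmem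
  have hg'Cc : Continuous g'C := hg'.comp_continuous hclc hclmem
  have hfeq : ∀ x ∈ Icc (0:ℝ) T, fC x = f x := by
    intro x hx; rw [hfCdef]; simp only [Function.comp_apply]; rw [hcleq x hx]
  have hgeq : ∀ x ∈ Icc (0:ℝ) T, gC x = g x := by
    intro x hx; rw [hgCdef]; simp only [Function.comp_apply]; rw [hcleq x hx]
  have hf'eq : ∀ x ∈ Icc (0:ℝ) T, f'C x = f' x := by
    intro x hx; rw [hf'Cdef]; simp only [Function.comp_apply]; rw [hcleq x hx]
  have hg'eq : ∀ x ∈ Icc (0:ℝ) T, g'C x = g' x := by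
    intro x hx; rw [hg'Cdef]; simp only [Function.comp_apply]; rw [hcleq x hx]
  have h0T : (0:ℝ) ∈ Icc (0:ℝ) T := ⟨le_rfl, hT.le⟩
  have hTT : T ∈ Icc (0:ℝ) T := ⟨hT.le, le_rfl⟩
  -- FTC representations
  have hfr0 : ∀ t ∈ Icc (0:ℝ) T, f t = f 0 + ∫ r in (0:ℝ)..t, f' r := by
    intro t ht
    have h1 : ∀ x ∈ uIcc (0:ℝ) t, HasDerivAt f (f' x) x := by
      intro x hx
      rw [uIcc_of_le ht.1] at hx
      exact hf x ⟨hx.1, hx.2.trans ht.2⟩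
    have h2 : IntervalIntegrable f' volume 0 t := by
      apply ContinuousOn.intervalIntegrable
      apply hf'.mono
      rw [uIcc_of_le ht.1]
      exact Icc_subset_Icc le_rfl ht.2
    rw [intervalIntegral.integral_eq_sub_of_hasDerivAt h1 h2]; ring
  have hgr0 : ∀ t ∈ Icc (0:ℝ) T, g t = g T - ∫ ξ in t..T, g' ξ := by
    intro t ht
    have h1 : ∀ x ∈ uIcc t T, HasDerivAt g (g' x) x := by
      intro x hx
      rw [uIcc_of_le ht.2] at hx
      exact hg x ⟨ht.1.trans hx.1, hx.2⟩
    have h2 : IntervalIntegrable g' volume t T := by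
      apply ContinuousOn.intervalIntegrable
      apply hg'.mono
      rw [uIcc_of_le ht.2]
      exact Icc_subset_Icc ht.1 le_rfl
    rw [intervalIntegral.integral_eq_sub_of_hasDerivAt h1 h2]; ring
  have hfrC : ∀ t ∈ Icc (0:ℝ) T, fC t = fC 0 + ∫ r in (0:ℝ)..t, f'C r := by
    intro t ht
    rw [hfeq t ht, hfeq 0 h0T,
      show (∫ r in (0:ℝ)..t, f'C r) = ∫ r in (0:ℝ)..t, f' r from
        intervalIntegral.integral_congr (fun r hr => by
          rw [uIcc_of_le ht.1] at hr
          exact hf'eq r ⟨hr.1, hr.2.trans ht.2⟩)]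
    exact hfr0 t ht
  have hgrC : ∀ t ∈ Icc (0:ℝ) T, gC t = gC T - ∫ ξ in t..T, g'C ξ := by
    intro t ht
    rw [hgeq t ht, hgeq T hTT,
      show (∫ ξ in t..T, g'C ξ) = ∫ ξ in t..T, g' ξ from
        intervalIntegral.integral_congr (fun ξ hξ => by
          rw [uIcc_of_le ht.2] at hξ
          exact hg'eq ξ ⟨ht.1.trans hξ.1, hξ.2⟩)]
    exact hgr0 t ht
  -- replace all integrals by clamped versions
  have eq1 : (∫ t in (0:ℝ)..T, ((c * ∫ r in (0:ℝ)..t, (t - r) ^ (-γ) * f' r) * g t))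
      = ∫ t in (0:ℝ)..T, ((c * ∫ r in (0:ℝ)..t, (t - r) ^ (-γ) * f'C r) * gC t) := by
    apply intervalIntegral.integral_congr
    intro t ht
    rw [uIcc_of_le hT.le] at ht
    dsimp only
    rw [hgeq t ht,
      show (∫ r in (0:ℝ)..t, (t - r) ^ (-γ) * f'C r)
          = ∫ r in (0:ℝ)..t, (t - r) ^ (-γ) * f' r from
        intervalIntegral.integral_congr (fun r hr => by
          rw [uIcc_of_le ht.1] at hr
          rw [hf'eq r ⟨hr.1, hr.2.trans ht.2⟩])]
  have eq2 : (∫ ξ in (0:ℝ)..T, ξ ^ (-γ) * g ξ) = ∫ ξ in (0:ℝ)..T, ξ ^ (-γ) * gC ξ := by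
    apply intervalIntegral.integral_congr
    intro ξ hξ
    rw [uIcc_of_le hT.le] at hξ
    dsimp only
    rw [hgeq ξ hξ]
  have eq3 : (∫ t in (0:ℝ)..T, f t * (-c * ∫ ξ in t..T, (ξ - t) ^ (-γ) * g' ξ))
      = ∫ t in (0:ℝ)..T, fC t * (-c * ∫ ξ in t..T, (ξ - t) ^ (-γ) * g'C ξ) := by
    apply intervalIntegral.integral_congr
    intro t ht
    rw [uIcc_of_le hT.le] at ht
    dsimp only
    rw [hfeq t ht,
      show (∫ ξ in t..T, (ξ - t) ^ (-γ) * g'C ξ)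
          = ∫ ξ in t..T, (ξ - t) ^ (-γ) * g' ξ from
        intervalIntegral.integral_congr (fun ξ hξ => by
          rw [uIcc_of_le ht.2] at hξ
          rw [hg'eq ξ ⟨ht.1.trans hξ.1, hξ.2⟩])]
  have eq4 : (∫ ξ in (0:ℝ)..T, (T - ξ) ^ (-γ) * f ξ)
      = ∫ ξ in (0:ℝ)..T, (T - ξ) ^ (-γ) * fC ξ := by
    apply intervalIntegral.integral_congr
    intro ξ hξ
    rw [uIcc_of_le hT.le] at hξ
    dsimp only
    rw [hfeq ξ hξ]
  rw [eq1, eq2, eq3, eq4, ← hfeq 0 h0T, ← hgeq T hTT]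
  -- pull out the constant c
  have hA : (∫ t in (0:ℝ)..T, ((c * ∫ r in (0:ℝ)..t, (t - r) ^ (-γ) * f'C r) * gC t))
      = c * ∫ t in (0:ℝ)..T, (∫ r in (0:ℝ)..t, (t - r) ^ (-γ) * f'C r) * gC t := by
    rw [← intervalIntegral.integral_const_mul]
    apply intervalIntegral.integral_congr
    intro t _
    ring
  have hB : (∫ t in (0:ℝ)..T, fC t * (-c * ∫ ξ in t..T, (ξ - t) ^ (-γ) * g'C ξ))
      = (-c) * ∫ t in (0:ℝ)..T, fC t * ∫ ξ in t..T, (ξ - t) ^ (-γ) * g'C ξ := by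
    rw [← intervalIntegral.integral_const_mul]
    apply intervalIntegral.integral_congr
    intro t _
    ring
  rw [hA, hB,
    claimL1 hT hγ0 hγ1 hf'Cc hgCc hg'Cc hgrC,
    claimL2 hT hγ0 hγ1 hg'Cc hgrC,
    claimR1 hT hγ0 hγ1 hfCc hf'Cc hg'Cc hfrC,
    claimR2 hT hγ0 hγ1 hf'Cc hfrC]
  linear_combination (-c) * claimSW (f' := f'C) (g' := g'C) hT hγ0 hγ1 hf'Cc hg'Cc
end

section
/- Let H be a real Hilbert space, T > 0, and γ ∈ (0,1). If v, w : [0,T] → H are continuously differentiable, then ∫_0^T ⟨(1/Γ(1−γ)) ∫_0^t (t−r)^{−γ} v'(r) dr, w(t)⟩ dt − ∫_0^T ⟨−(1/Γ(1−γ)) ∫_t^T (ξ−t)^{−γ} w'(ξ) dξ, v(t)⟩ dt = ⟨w(T), (1/Γ(1−γ)) ∫_0^T (T−ξ)^{−γ} v(ξ) dξ⟩ − ⟨v(0), (1/Γ(1−γ)) ∫_0^T ξ^{−γ} w(ξ) dξ⟩, where all integrals of H-valued functions are Bochner integrals and ⟨·,·⟩ is the inner product of H. -/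
open MeasureTheory Real Set
open scoped InnerProductSpace

section Helpers

variable {H : Type*} [NormedAddCommGroup H] [InnerProductSpace ℝ H] [CompleteSpace H]

private lemma my_measurable_rpow_const (c : ℝ) : Measurable fun x : ℝ => x ^ c :=
  measurable_of_continuousOn_compl_singleton 0 fun x hx =>
    (Real.continuousAt_rpow_const x c (Or.inl hx)).continuousWithinAt

private lemma II_smul_cont {f : ℝ → ℝ} {g : ℝ → H} {a b : ℝ}
    (hf : IntervalIntegrable f volume a b) (hg : Continuous g) :
    IntervalIntegrable (fun x => f x • g x) volume a b := by
  obtain ⟨C, hC⟩ :=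
    (isCompact_uIcc (a := a) (b := b)).exists_bound_of_continuousOn hg.continuousOn
  rw [intervalIntegrable_iff] at hf ⊢
  exact hf.smul_of_top_left
    (memLp_top_of_bound hg.aestronglyMeasurable.restrict C
      (by filter_upwards [ae_restrict_mem measurableSet_uIoc] with x hx using
        hC x (uIoc_subset_uIcc hx)))

private lemma II_rpow {γ : ℝ} (hγ : γ < 1) (a b : ℝ) :
    IntervalIntegrable (fun u : ℝ => u ^ (-γ)) volume a b :=
  intervalIntegral.intervalIntegrable_rpow' (by linarith)

private lemma inner_intervalIntegral {F : ℝ → H} {a b : ℝ} (y : H)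
    (hF : IntervalIntegrable F volume a b) :
    ⟪∫ r in a..b, F r, y⟫_ℝ = ∫ r in a..b, ⟪F r, y⟫_ℝ := by
  have h0 : ⟪y, ∫ r in a..b, F r⟫_ℝ = (innerSL ℝ y) (∫ r in a..b, F r) := rfl
  rw [real_inner_comm, h0, ← ContinuousLinearMap.intervalIntegral_comp_comm (innerSL ℝ y) hF]
  exact intervalIntegral.integral_congr fun r _ => real_inner_comm _ _

end Helpers

private lemma triangle_swap {T γ : ℝ} (hT : 0 < T) (hγ : γ ∈ Ioo (0:ℝ) 1)
    {ψ : ℝ → ℝ → ℝ} (hψ : Continuous fun p : ℝ × ℝ => ψ p.1 p.2) :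
    ∫ t in (0:ℝ)..T, ∫ u in (0:ℝ)..t, u ^ (-γ) * ψ u t
      = ∫ u in (0:ℝ)..T, ∫ t in u..T, u ^ (-γ) * ψ u t := by
  obtain ⟨C, hC⟩ := (isCompact_Icc.prod isCompact_Icc).exists_bound_of_continuousOn
      (hψ.continuousOn (s := Icc (0:ℝ) T ×ˢ Icc (0:ℝ) T))
  set μ : Measure ℝ := volume.restrict (Ioc (0:ℝ) T) with hμ
  set f : ℝ → ℝ → ℝ := fun t u => (Ioc (0:ℝ) t).indicator (fun u => u ^ (-γ) * ψ u t) u with hf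
  have hrpow : IntegrableOn (fun u : ℝ => u ^ (-γ)) (Ioc 0 T) := by
    rw [← intervalIntegrable_iff_integrableOn_Ioc_of_le hT.le]
    exact II_rpow hγ.2 0 T
  have hmeas : AEStronglyMeasurable (Function.uncurry f) (μ.prod μ) := by
    have hset : MeasurableSet {p : ℝ × ℝ | p.2 ∈ Ioc 0 p.1} :=
      (measurableSet_lt measurable_const measurable_snd).inter
        (measurableSet_le measurable_snd measurable_fst)
    have h1 : Measurable fun p : ℝ × ℝ => p.2 ^ (-γ) * ψ p.2 p.1 :=
      ((my_measurable_rpow_const (-γ)).comp measurable_snd).mul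
        (hψ.measurable.comp (measurable_snd.prodMk measurable_fst))
    have heq : Function.uncurry f =
        ({p : ℝ × ℝ | p.2 ∈ Ioc 0 p.1}).indicator fun p => p.2 ^ (-γ) * ψ p.2 p.1 := by
      ext p
      by_cases hp : p.2 ∈ Ioc 0 p.1 <;>
        simp [Function.uncurry, hf, Set.indicator_apply, hp]
    rw [heq]
    exact (h1.indicator hset).aestronglyMeasurable
  have hint : Integrable (Function.uncurry f) (μ.prod μ) := by
    have h1 : Integrable (fun _ : ℝ => C) μ := by
      rw [hμ]
      exact (integrableOn_const_iff).2 (Or.inr measure_Ioc_lt_top)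
    have hbound : Integrable (fun p : ℝ × ℝ => C * p.2 ^ (-γ)) (μ.prod μ) :=
      h1.mul_prod hrpow
    refine hbound.mono' hmeas ?_
    rw [hμ, Measure.prod_restrict]
    filter_upwards [ae_restrict_mem (measurableSet_Ioc.prod measurableSet_Ioc)] with p hp
    obtain ⟨hp1, hp2⟩ : p.1 ∈ Ioc (0:ℝ) T ∧ p.2 ∈ Ioc (0:ℝ) T := hp
    by_cases hmem : p.2 ∈ Ioc 0 p.1
    · have h2 : Function.uncurry f p = p.2 ^ (-γ) * ψ p.2 p.1 :=
        by
        show (Ioc (0:ℝ) p.1).indicator (fun u => u ^ (-γ) * ψ u p.1) p.2 = _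
        exact Set.indicator_of_mem hmem _
      rw [h2, norm_mul, mul_comm C]
      have hb : ‖ψ p.2 p.1‖ ≤ C :=
        hC (p.2, p.1) ⟨Ioc_subset_Icc_self hp2, Ioc_subset_Icc_self hp1⟩
      have hnn : ‖p.2 ^ (-γ)‖ = p.2 ^ (-γ) := abs_of_nonneg (rpow_nonneg hp2.1.le _)
      calc ‖p.2 ^ (-γ)‖ * ‖ψ p.2 p.1‖ ≤ ‖p.2 ^ (-γ)‖ * C := by
            gcongr
        _ = p.2 ^ (-γ) * C := by rw [hnn]
    · have h2 : Function.uncurry f p = 0 :=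
        by
        show (Ioc (0:ℝ) p.1).indicator (fun u => u ^ (-γ) * ψ u p.1) p.2 = 0
        exact Set.indicator_of_notMem hmem _
      rw [h2]
      have hC0 : 0 ≤ C := le_trans (norm_nonneg (ψ 0 0))
        (hC (0, 0) ⟨⟨le_rfl, hT.le⟩, ⟨le_rfl, hT.le⟩⟩)
      simp only [norm_zero]
      exact mul_nonneg hC0 (rpow_nonneg hp2.1.le _)
  calc ∫ t in (0:ℝ)..T, ∫ u in (0:ℝ)..t, u ^ (-γ) * ψ u t
      = ∫ t, (∫ u, f t u ∂μ) ∂μ := by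
        rw [hμ, intervalIntegral.integral_of_le hT.le]
        refine setIntegral_congr_fun measurableSet_Ioc fun t ht => ?_
        rw [intervalIntegral.integral_of_le ht.1.le, hf]
        simp only
        rw [setIntegral_indicator measurableSet_Ioc, Ioc_inter_Ioc]
        norm_num [min_eq_right ht.2]
    _ = ∫ u, (∫ t, f t u ∂μ) ∂μ := integral_integral_swap hint
    _ = ∫ u in (0:ℝ)..T, ∫ t in u..T, u ^ (-γ) * ψ u t := by
        rw [hμ, intervalIntegral.integral_of_le hT.le]
        refine setIntegral_congr_fun measurableSet_Ioc fun u hu => ?_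
        have h3 : ∀ t, f t u = (Ici u).indicator (fun t => u ^ (-γ) * ψ u t) t := by
          intro t
          by_cases h : u ≤ t <;>
            simp [hf, Set.indicator_apply, mem_Ioc, h, hu.1]
        simp_rw [h3]
        rw [setIntegral_indicator measurableSet_Ici]
        have h4 : Ioc (0:ℝ) T ∩ Ici u = Icc u T := by
          ext t
          simp only [mem_inter_iff, mem_Ioc, mem_Ici, mem_Icc]
          constructor
          · rintro ⟨⟨_, h2⟩, h3⟩; exact ⟨h3, h2⟩
          · rintro ⟨h1, h2⟩; exact ⟨⟨lt_of_lt_of_le hu.1 h1, h2⟩, h1⟩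
        rw [h4, integral_Icc_eq_integral_Ioc, ← intervalIntegral.integral_of_le hu.2]

private lemma key {H : Type*} [NormedAddCommGroup H] [InnerProductSpace ℝ H] [CompleteSpace H]
    {T γ : ℝ} (hT : 0 < T) (hγ : γ ∈ Ioo (0:ℝ) 1)
    {v v' w w' : ℝ → H}
    (hvc : Continuous v) (hv'c : Continuous v') (hwc : Continuous w) (hw'c : Continuous w')
    (hdv : ∀ t ∈ Ioo (0:ℝ) T, HasDerivAt v (v' t) t)
    (hdw : ∀ t ∈ Ioo (0:ℝ) T, HasDerivAt w (w' t) t) :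
    (∫ t in (0:ℝ)..T, ∫ u in (0:ℝ)..t, u ^ (-γ) * ⟪v' (t - u), w t⟫_ℝ)
      + (∫ t in (0:ℝ)..T, ∫ u in (0:ℝ)..(T - t), u ^ (-γ) * ⟪v t, w' (t + u)⟫_ℝ)
    = (∫ u in (0:ℝ)..T, u ^ (-γ) * ⟪v (T - u), w T⟫_ℝ)
      - (∫ u in (0:ℝ)..T, u ^ (-γ) * ⟪v 0, w u⟫_ℝ) := by
  -- continuity facts
  have hwshift : Continuous fun p : ℝ × ℝ => w (p.2 + p.1) :=
    hwc.comp (continuous_snd.add continuous_fst)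
  have hψ1 : Continuous fun p : ℝ × ℝ => ⟪v' (p.2 - p.1), w p.2⟫_ℝ :=
    (hv'c.comp (continuous_snd.sub continuous_fst)).inner (hwc.comp continuous_snd)
  have hψ2 : Continuous fun p : ℝ × ℝ => ⟪v (T - p.2), w' (T - p.2 + p.1)⟫_ℝ :=
    (hvc.comp (continuous_const.sub continuous_snd)).inner
      (hw'c.comp ((continuous_const.sub continuous_snd).add continuous_fst))
  -- step 1 : first term as integral over u of integrals in s
  have e1 : ∀ u : ℝ, (∫ t in u..T, u ^ (-γ) * ⟪v' (t - u), w t⟫_ℝ)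
      = ∫ s in (0:ℝ)..(T - u), u ^ (-γ) * ⟪v' s, w (s + u)⟫_ℝ := by
    intro u
    have h := intervalIntegral.integral_comp_sub_right
      (fun s => u ^ (-γ) * ⟪v' s, w (s + u)⟫_ℝ) u (a := u) (b := T)
    simpa using h
  have hA : (∫ t in (0:ℝ)..T, ∫ u in (0:ℝ)..t, u ^ (-γ) * ⟪v' (t - u), w t⟫_ℝ)
      = ∫ u in (0:ℝ)..T, ∫ s in (0:ℝ)..(T - u), u ^ (-γ) * ⟪v' s, w (s + u)⟫_ℝ := by
    rw [triangle_swap hT hγ (ψ := fun u t => ⟪v' (t - u), w t⟫_ℝ) hψ1]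
    exact intervalIntegral.integral_congr fun u _ => e1 u
  -- step 2 : second term likewise
  have e2 : ∀ u : ℝ, (∫ t in u..T, u ^ (-γ) * ⟪v (T - t), w' (T - t + u)⟫_ℝ)
      = ∫ s in (0:ℝ)..(T - u), u ^ (-γ) * ⟪v s, w' (s + u)⟫_ℝ := by
    intro u
    have h := intervalIntegral.integral_comp_sub_left
      (fun s => u ^ (-γ) * ⟪v s, w' (s + u)⟫_ℝ) T (a := u) (b := T)
    simpa using h
  have hB : (∫ t in (0:ℝ)..T, ∫ u in (0:ℝ)..(T - t), u ^ (-γ) * ⟪v t, w' (t + u)⟫_ℝ)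
      = ∫ u in (0:ℝ)..T, ∫ s in (0:ℝ)..(T - u), u ^ (-γ) * ⟪v s, w' (s + u)⟫_ℝ := by
    have h := intervalIntegral.integral_comp_sub_left
      (fun t => ∫ u in (0:ℝ)..(T - t), u ^ (-γ) * ⟪v t, w' (t + u)⟫_ℝ) T (a := 0) (b := T)
    simp only [sub_zero, sub_self] at h
    rw [← h]
    have h2 : (∫ t in (0:ℝ)..T, ∫ u in (0:ℝ)..(T - (T - t)), u ^ (-γ)
          * ⟪v (T - t), w' (T - t + u)⟫_ℝ)
        = ∫ u in (0:ℝ)..T, ∫ t in u..T, u ^ (-γ) * ⟪v (T - t), w' (T - t + u)⟫_ℝ := by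
      have h3 : (∫ t in (0:ℝ)..T, ∫ u in (0:ℝ)..(T - (T - t)), u ^ (-γ)
            * ⟪v (T - t), w' (T - t + u)⟫_ℝ)
          = ∫ t in (0:ℝ)..T, ∫ u in (0:ℝ)..t, u ^ (-γ) * ⟪v (T - t), w' (T - t + u)⟫_ℝ := by
        refine intervalIntegral.integral_congr fun t _ => ?_
        rw [sub_sub_cancel]
      rw [h3, triangle_swap hT hγ (ψ := fun u t => ⟪v (T - t), w' (T - t + u)⟫_ℝ) hψ2]
    rw [h2]
    exact intervalIntegral.integral_congr fun u _ => e2 u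
  rw [hA, hB]
  -- integrability of the two u-integrands
  have hcont1 : Continuous fun u : ℝ => ∫ s in (0:ℝ)..(T - u), ⟪v' s, w (s + u)⟫_ℝ := by
    refine intervalIntegral.continuous_parametric_intervalIntegral_of_continuous ?_
      (continuous_const.sub continuous_id)
    exact (hv'c.comp continuous_snd).inner hwshift
  have hcont2 : Continuous fun u : ℝ => ∫ s in (0:ℝ)..(T - u), ⟪v s, w' (s + u)⟫_ℝ := by
    refine intervalIntegral.continuous_parametric_intervalIntegral_of_continuous ?_
      (continuous_const.sub continuous_id)
    exact (hvc.comp continuous_snd).inner (hw'c.comp (continuous_snd.add continuous_fst))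
  have hfun1 : (fun u : ℝ => ∫ s in (0:ℝ)..(T - u), u ^ (-γ) * ⟪v' s, w (s + u)⟫_ℝ)
      = fun u : ℝ => u ^ (-γ) * ∫ s in (0:ℝ)..(T - u), ⟪v' s, w (s + u)⟫_ℝ :=
    funext fun u => intervalIntegral.integral_const_mul _ _
  have hfun2 : (fun u : ℝ => ∫ s in (0:ℝ)..(T - u), u ^ (-γ) * ⟪v s, w' (s + u)⟫_ℝ)
      = fun u : ℝ => u ^ (-γ) * ∫ s in (0:ℝ)..(T - u), ⟪v s, w' (s + u)⟫_ℝ :=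
    funext fun u => intervalIntegral.integral_const_mul _ _
  have Int1 : IntervalIntegrable
      (fun u : ℝ => ∫ s in (0:ℝ)..(T - u), u ^ (-γ) * ⟪v' s, w (s + u)⟫_ℝ) volume 0 T := by
    rw [hfun1]; exact (II_rpow hγ.2 0 T).mul_continuousOn hcont1.continuousOn
  have Int2 : IntervalIntegrable
      (fun u : ℝ => ∫ s in (0:ℝ)..(T - u), u ^ (-γ) * ⟪v s, w' (s + u)⟫_ℝ) volume 0 T := by
    rw [hfun2]; exact (II_rpow hγ.2 0 T).mul_continuousOn hcont2.continuousOn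
  rw [← intervalIntegral.integral_add Int1 Int2]
  -- pointwise FTC on each diagonal
  have hsum : ∀ u ∈ uIcc (0:ℝ) T,
      ((∫ s in (0:ℝ)..(T - u), u ^ (-γ) * ⟪v' s, w (s + u)⟫_ℝ)
        + ∫ s in (0:ℝ)..(T - u), u ^ (-γ) * ⟪v s, w' (s + u)⟫_ℝ)
      = u ^ (-γ) * ⟪v (T - u), w T⟫_ℝ - u ^ (-γ) * ⟪v 0, w u⟫_ℝ := by
    intro u hu
    rw [uIcc_of_le hT.le] at hu
    rw [intervalIntegral.integral_const_mul, intervalIntegral.integral_const_mul,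
      ← mul_add, ← mul_sub]
    congr 1
    have hle : (0:ℝ) ≤ T - u := by linarith [hu.2]
    have hint1 : IntervalIntegrable (fun s => ⟪v' s, w (s + u)⟫_ℝ) volume 0 (T - u) :=
      ((hv'c.inner (hwc.comp (continuous_id.add continuous_const))).continuousOn).intervalIntegrable
    have hint2 : IntervalIntegrable (fun s => ⟪v s, w' (s + u)⟫_ℝ) volume 0 (T - u) :=
      ((hvc.inner (hw'c.comp (continuous_id.add continuous_const))).continuousOn).intervalIntegrable
    rw [← intervalIntegral.integral_add hint1 hint2]
    have hftc := intervalIntegral.integral_eq_sub_of_hasDeriv_right_of_le hle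
      (f := fun s => ⟪v s, w (s + u)⟫_ℝ)
      (f' := fun s => ⟪v' s, w (s + u)⟫_ℝ + ⟪v s, w' (s + u)⟫_ℝ)
      ((hvc.inner (hwc.comp (continuous_id.add continuous_const))).continuousOn)
      (fun x hx => ?_)
      (((hv'c.inner (hwc.comp (continuous_id.add continuous_const))).add
        (hvc.inner (hw'c.comp (continuous_id.add continuous_const)))).continuousOn.intervalIntegrable)
    · rw [hftc]
      simp
    · -- derivative
      have hx1 : x ∈ Ioo (0:ℝ) T := ⟨hx.1, by linarith [hx.2, hu.1]⟩
      have hx2 : x + u ∈ Ioo (0:ℝ) T := ⟨by linarith [hx.1, hu.1], by linarith [hx.2]⟩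
      have h1 := hdv x hx1
      have h2 : HasDerivAt (fun s => w (s + u)) (w' (x + u)) x := by
        exact HasDerivAt.comp_add_const x u (hdw (x + u) hx2)
      have h3 := HasDerivAt.inner (𝕜 := ℝ) h1 h2
      have h4 : ⟪v x, w' (x + u)⟫_ℝ + ⟪v' x, w (x + u)⟫_ℝ
          = ⟪v' x, w (x + u)⟫_ℝ + ⟪v x, w' (x + u)⟫_ℝ := add_comm _ _
      rw [h4] at h3
      exact h3.hasDerivWithinAt
  rw [intervalIntegral.integral_congr hsum]
  exact intervalIntegral.integral_sub
    ((II_rpow hγ.2 0 T).mul_continuousOn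
      ((hvc.comp (continuous_const.sub continuous_id)).inner continuous_const).continuousOn)
    ((II_rpow hγ.2 0 T).mul_continuousOn
      ((continuous_const.inner (hwc.comp continuous_id)).continuousOn))

/-- **Vector-valued fractional integration by parts formula.**
For a real Hilbert space `H`, `γ ∈ (0,1)` and `v, w : [0,T] → H` continuously
differentiable:
`∫_0^T ⟨∂_t^γ v, w⟩ - ⟨∂_{T-t}^γ w, v⟩ dt = ⟨w(T), (I^{1-γ}_{0+} v)(T)⟩ - ⟨v(0), (I^{1-γ}_{T-} w)(0)⟩`,
with Caputo derivatives and Riemann–Liouville integrals realized as Bochner integrals. -/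
theorem caputo_fractional_integration_by_parts_hilbert
    {H : Type*} [NormedAddCommGroup H] [InnerProductSpace ℝ H] [CompleteSpace H]
    (T γ : ℝ) (hT : 0 < T) (hγ : γ ∈ Ioo (0:ℝ) 1)
    (v v' w w' : ℝ → H)
    (hv : ∀ t ∈ Icc (0:ℝ) T, HasDerivAt v (v' t) t)
    (hv' : ContinuousOn v' (Icc 0 T))
    (hw : ∀ t ∈ Icc (0:ℝ) T, HasDerivAt w (w' t) t)
    (hw' : ContinuousOn w' (Icc 0 T)) :
    (∫ t in (0:ℝ)..T,
        ⟪(1 / Real.Gamma (1 - γ)) • ∫ r in (0:ℝ)..t, (t - r) ^ (-γ) • v' r, w t⟫_ℝ)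
      - (∫ t in (0:ℝ)..T,
          ⟪-((1 / Real.Gamma (1 - γ)) • ∫ ξ in t..T, (ξ - t) ^ (-γ) • w' ξ), v t⟫_ℝ) =
    ⟪w T, (1 / Real.Gamma (1 - γ)) • ∫ ξ in (0:ℝ)..T, (T - ξ) ^ (-γ) • v ξ⟫_ℝ
      - ⟪v 0, (1 / Real.Gamma (1 - γ)) • ∫ ξ in (0:ℝ)..T, ξ ^ (-γ) • w ξ⟫_ℝ := by
  set c : ℝ := 1 / Real.Gamma (1 - γ) with hc
  -- clamped versions of the four functions
  set φ : ℝ → ℝ := fun s => max 0 (min s T) with hφ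
  have hφc : Continuous φ := continuous_const.max (continuous_id.min continuous_const)
  have hφmem : ∀ s, φ s ∈ Icc (0:ℝ) T :=
    fun s => ⟨le_max_left _ _, max_le hT.le (min_le_right _ _)⟩
  have hφeq : ∀ s ∈ Icc (0:ℝ) T, φ s = s := fun s hs => by
    rw [hφ]; simp only; rw [min_eq_left hs.2, max_eq_right hs.1]
  set V : ℝ → H := fun s => v (φ s) with hV
  set V' : ℝ → H := fun s => v' (φ s) with hV'
  set W : ℝ → H := fun s => w (φ s) with hW
  set W' : ℝ → H := fun s => w' (φ s) with hW'
  have hvcont : ContinuousOn v (Icc (0:ℝ) T) :=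
    fun s hs => (hv s hs).continuousAt.continuousWithinAt
  have hwcont : ContinuousOn w (Icc (0:ℝ) T) :=
    fun s hs => (hw s hs).continuousAt.continuousWithinAt
  have hVc : Continuous V := hvcont.comp_continuous hφc hφmem
  have hV'c : Continuous V' := hv'.comp_continuous hφc hφmem
  have hWc : Continuous W := hwcont.comp_continuous hφc hφmem
  have hW'c : Continuous W' := hw'.comp_continuous hφc hφmem
  have hVeq : ∀ s ∈ Icc (0:ℝ) T, V s = v s := fun s hs => by rw [hV]; simp only; rw [hφeq s hs]
  have hV'eq : ∀ s ∈ Icc (0:ℝ) T, V' s = v' s := fun s hs => by rw [hV']; simp only; rw [hφeq s hs]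
  have hWeq : ∀ s ∈ Icc (0:ℝ) T, W s = w s := fun s hs => by rw [hW]; simp only; rw [hφeq s hs]
  have hW'eq : ∀ s ∈ Icc (0:ℝ) T, W' s = w' s := fun s hs => by rw [hW']; simp only; rw [hφeq s hs]
  have hdV : ∀ t ∈ Ioo (0:ℝ) T, HasDerivAt V (V' t) t := by
    intro t ht
    rw [hV'eq t (Ioo_subset_Icc_self ht)]
    refine (hv t (Ioo_subset_Icc_self ht)).congr_of_eventuallyEq ?_
    filter_upwards [Ioo_mem_nhds ht.1 ht.2] with x hx
    exact hVeq x (Ioo_subset_Icc_self hx)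
  have hdW : ∀ t ∈ Ioo (0:ℝ) T, HasDerivAt W (W' t) t := by
    intro t ht
    rw [hW'eq t (Ioo_subset_Icc_self ht)]
    refine (hw t (Ioo_subset_Icc_self ht)).congr_of_eventuallyEq ?_
    filter_upwards [Ioo_mem_nhds ht.1 ht.2] with x hx
    exact hWeq x (Ioo_subset_Icc_self hx)
  have keyEq := key hT hγ hVc hV'c hWc hW'c hdV hdW
  -- transform the first LHS term
  have hL1 : (∫ t in (0:ℝ)..T, ⟪c • ∫ r in (0:ℝ)..t, (t - r) ^ (-γ) • v' r, w t⟫_ℝ)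
      = c * ∫ t in (0:ℝ)..T, ∫ u in (0:ℝ)..t, u ^ (-γ) * ⟪V' (t - u), W t⟫_ℝ := by
    rw [← intervalIntegral.integral_const_mul]
    refine intervalIntegral.integral_congr fun t ht => ?_
    rw [uIcc_of_le hT.le] at ht
    have hker : IntervalIntegrable (fun r => (t - r) ^ (-γ)) volume 0 t := by
      have h := (II_rpow (γ := γ) hγ.2 t 0).comp_sub_left t
      simpa using h
    have hsub : (∫ r in (0:ℝ)..t, (t - r) ^ (-γ) • v' r)
        = ∫ r in (0:ℝ)..t, (t - r) ^ (-γ) • V' r := by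
      refine intervalIntegral.integral_congr fun r hr => ?_
      rw [uIcc_of_le ht.1] at hr
      rw [hV'eq r ⟨hr.1, le_trans hr.2 ht.2⟩]
    rw [hsub, ← hWeq t ht, real_inner_smul_left]
    congr 1
    rw [inner_intervalIntegral (W t) (II_smul_cont hker hV'c)]
    rw [intervalIntegral.integral_congr
      (g := fun r => (t - r) ^ (-γ) * ⟪V' r, W t⟫_ℝ)
      (fun r _ => real_inner_smul_left _ _ _)]
    have h := intervalIntegral.integral_comp_sub_left
      (fun u => u ^ (-γ) * ⟪V' (t - u), W t⟫_ℝ) t (a := 0) (b := t)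
    simp only [sub_sub_cancel, sub_self, sub_zero] at h
    exact h
  -- transform the second LHS term
  have hL2 : (∫ t in (0:ℝ)..T, ⟪-(c • ∫ ξ in t..T, (ξ - t) ^ (-γ) • w' ξ), v t⟫_ℝ)
      = -(c * ∫ t in (0:ℝ)..T, ∫ u in (0:ℝ)..(T - t), u ^ (-γ) * ⟪V t, W' (t + u)⟫_ℝ) := by
    rw [← intervalIntegral.integral_const_mul, ← intervalIntegral.integral_neg]
    refine intervalIntegral.integral_congr fun t ht => ?_
    rw [uIcc_of_le hT.le] at ht
    have hker : IntervalIntegrable (fun ξ => (ξ - t) ^ (-γ)) volume t T := by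
      have h := (II_rpow (γ := γ) hγ.2 0 (T - t)).comp_sub_right t
      simpa using h
    have hsub : (∫ ξ in t..T, (ξ - t) ^ (-γ) • w' ξ)
        = ∫ ξ in t..T, (ξ - t) ^ (-γ) • W' ξ := by
      refine intervalIntegral.integral_congr fun ξ hξ => ?_
      rw [uIcc_of_le ht.2] at hξ
      rw [hW'eq ξ ⟨le_trans ht.1 hξ.1, hξ.2⟩]
    rw [hsub, ← hVeq t ht, inner_neg_left, real_inner_smul_left]
    rw [inner_intervalIntegral (V t) (II_smul_cont hker hW'c)]
    rw [intervalIntegral.integral_congr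
      (g := fun ξ => (ξ - t) ^ (-γ) * ⟪V t, W' ξ⟫_ℝ)
      (fun ξ _ => by rw [real_inner_smul_left, real_inner_comm])]
    have h := intervalIntegral.integral_comp_sub_right
      (fun u => u ^ (-γ) * ⟪V t, W' (t + u)⟫_ℝ) t (a := t) (b := T)
    simp only [add_sub_cancel, sub_self] at h
    rw [← h]
  -- transform the first RHS term
  have hR1 : ⟪w T, c • ∫ ξ in (0:ℝ)..T, (T - ξ) ^ (-γ) • v ξ⟫_ℝ
      = c * ∫ u in (0:ℝ)..T, u ^ (-γ) * ⟪V (T - u), W T⟫_ℝ := by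
    have hker : IntervalIntegrable (fun ξ => (T - ξ) ^ (-γ)) volume 0 T := by
      have h := (II_rpow (γ := γ) hγ.2 T 0).comp_sub_left T
      simpa using h
    have hsub : (∫ ξ in (0:ℝ)..T, (T - ξ) ^ (-γ) • v ξ)
        = ∫ ξ in (0:ℝ)..T, (T - ξ) ^ (-γ) • V ξ := by
      refine intervalIntegral.integral_congr fun ξ hξ => ?_
      rw [uIcc_of_le hT.le] at hξ
      rw [hVeq ξ hξ]
    rw [hsub, real_inner_smul_right, real_inner_comm]
    rw [inner_intervalIntegral (w T) (II_smul_cont hker hVc)]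
    congr 1
    rw [intervalIntegral.integral_congr
      (g := fun ξ => (T - ξ) ^ (-γ) * ⟪V ξ, W T⟫_ℝ)
      (fun ξ _ => by
        rw [real_inner_smul_left, hWeq T ⟨hT.le, le_rfl⟩])]
    have h := intervalIntegral.integral_comp_sub_left
      (fun u => u ^ (-γ) * ⟪V (T - u), W T⟫_ℝ) T (a := 0) (b := T)
    simp only [sub_sub_cancel, sub_self, sub_zero] at h
    exact h
  -- transform the second RHS term
  have hR2 : ⟪v 0, c • ∫ ξ in (0:ℝ)..T, ξ ^ (-γ) • w ξ⟫_ℝ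
      = c * ∫ u in (0:ℝ)..T, u ^ (-γ) * ⟪V 0, W u⟫_ℝ := by
    have hker : IntervalIntegrable (fun ξ : ℝ => ξ ^ (-γ)) volume 0 T := II_rpow hγ.2 0 T
    have hsub : (∫ ξ in (0:ℝ)..T, ξ ^ (-γ) • w ξ)
        = ∫ ξ in (0:ℝ)..T, ξ ^ (-γ) • W ξ := by
      refine intervalIntegral.integral_congr fun ξ hξ => ?_
      rw [uIcc_of_le hT.le] at hξ
      rw [hWeq ξ hξ]
    rw [hsub, real_inner_smul_right, real_inner_comm]
    rw [inner_intervalIntegral (v 0) (II_smul_cont hker hWc)]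
    congr 1
    refine intervalIntegral.integral_congr fun ξ _ => ?_
    rw [real_inner_smul_left, real_inner_comm, hVeq 0 ⟨le_rfl, hT.le⟩]
  rw [hL1, hL2, hR1, hR2, sub_neg_eq_add, ← mul_add, ← mul_sub, keyEq]
end
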